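/- Let F be a subgroup of a group G with the congruence extension property (for every normal subgroup N of F, ⟨N⟩^G ∩ F = N), and suppose F is free of rank 2. Then every countable group C embeds into a quotient of G; i.e., G is SQ-universal. -/

import Mathlib

open Function Subgroup Monoid SemidirectProduct

namespace Stmt17Aux

/-- The shift automorphism of `FreeGroup ℤ`. -/
noncomputable def shift : MulAut (FreeGroup ℤ) := FreeGroup.freeGroupCongr (Equiv.addRight (1 : ℤ))

/-- The `ℤ`-action on `FreeGroup ℤ` by shifting. -/
noncomputable def shiftHom : Multiplicative ℤ →* MulAut (FreeGroup ℤ) := zpowersHom _ shift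

lemma shift_zpow (m : ℤ) : ∀ k : ℤ, (shift ^ m) (FreeGroup.of k) = FreeGroup.of (k + m) := by
  induction m using Int.induction_on with
  | zero => simp
  | succ n ih =>
      intro k
      have h1 : shift ^ ((n : ℤ) + 1) = shift ^ (n : ℤ) * shift := by
        rw [zpow_add, zpow_one]
      have hs : shift (FreeGroup.of k) = FreeGroup.of (k + 1) := by simp [shift]
      rw [h1]
      show (shift ^ (n : ℤ)) (shift (FreeGroup.of k)) = _
      rw [hs, ih (k + 1)]
      ring_nf
  | pred n ih =>
      intro k
      have h1 : shift ^ (-(n : ℤ) - 1) = shift ^ (-(n : ℤ)) * shift⁻¹ := by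
        rw [← zpow_neg_one, ← zpow_add]; ring_nf
      have hs : shift⁻¹ (FreeGroup.of k) = FreeGroup.of (k - 1) := by
        show (FreeGroup.freeGroupCongr (Equiv.addRight (1 : ℤ))).symm (FreeGroup.of k) = _
        simp [sub_eq_add_neg]
      rw [h1]
      show (shift ^ (-(n : ℤ))) (shift⁻¹ (FreeGroup.of k)) = _
      rw [hs, ih (k - 1)]
      ring_nf

lemma shiftHom_apply (m k : ℤ) :
    shiftHom (Multiplicative.ofAdd m) (FreeGroup.of k) = FreeGroup.of (k + m) := by
  have : shiftHom (Multiplicative.ofAdd m) = shift ^ m := by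
    simp [shiftHom]
  rw [this, shift_zpow]

/-- `a n = y⁻ⁿ x yⁿ` in the free group on two generators. -/
def aGen (n : ℕ) : FreeGroup (Fin 2) :=
  (FreeGroup.of 1)⁻¹ ^ n * FreeGroup.of 0 * (FreeGroup.of 1) ^ n

/-- The `y⁻ⁿ x yⁿ` freely generate a free subgroup. -/
lemma aGen_injective : Injective (FreeGroup.lift aGen) := by
  classical
  let W := FreeGroup ℤ ⋊[shiftHom] Multiplicative ℤ
  let Ψ : FreeGroup (Fin 2) →* W :=
    FreeGroup.lift (fun i => if i = 0 then inl (FreeGroup.of (0 : ℤ))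
      else inr (Multiplicative.ofAdd (1 : ℤ)))
  let h : FreeGroup ℕ →* FreeGroup ℤ := FreeGroup.map (fun n : ℕ => -(n : ℤ))
  have key : Ψ.comp (FreeGroup.lift aGen) = SemidirectProduct.inl.comp h := by
    apply FreeGroup.ext_hom
    intro n
    show Ψ (FreeGroup.lift aGen (FreeGroup.of n)) = inl (h (FreeGroup.of n))
    rw [FreeGroup.lift_apply_of]
    have hx : Ψ (FreeGroup.of (0 : Fin 2)) = inl (FreeGroup.of (0 : ℤ)) := by
      simp [Ψ]
    have hy : Ψ (FreeGroup.of (1 : Fin 2)) = inr (Multiplicative.ofAdd (1 : ℤ)) := by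
      simp [Ψ]
    have hmap : h (FreeGroup.of n) = FreeGroup.of (-(n : ℤ)) := FreeGroup.map.of
    rw [hmap]
    have hpow : (inr (Multiplicative.ofAdd (1 : ℤ)) : W) ^ n
        = inr (Multiplicative.ofAdd (n : ℤ)) := by
      rw [← map_pow]
      congr 1
      simp [← ofAdd_nsmul]
    have : Ψ (aGen n) =
        (inr (Multiplicative.ofAdd (n : ℤ)))⁻¹ * inl (FreeGroup.of (0 : ℤ)) *
          inr (Multiplicative.ofAdd (n : ℤ)) := by
      simp only [aGen, map_mul, map_pow, map_inv, hx, hy, inv_pow, hpow]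
    rw [this]
    have h2 := SemidirectProduct.inl_aut (φ := shiftHom)
      (Multiplicative.ofAdd (-(n : ℤ))) (FreeGroup.of (0 : ℤ))
    rw [shiftHom_apply, zero_add] at h2
    rw [h2]
    congr 1
    · congr 1
      simp
    · simp
  have hinj : Injective h := by
    have hli : ∀ u, (FreeGroup.map fun z : ℤ => (-z).toNat) (h u) = u := by
      intro u
      show FreeGroup.map _ (FreeGroup.map _ u) = u
      rw [FreeGroup.map.comp]
      have : ((fun z : ℤ => (-z).toNat) ∘ fun n : ℕ => -(n : ℤ)) = fun z : ℕ => z := by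
        funext z; simp
      rw [this, FreeGroup.map.id']
    exact LeftInverse.injective hli
  have : Injective (Ψ.comp (FreeGroup.lift aGen)) := by
    rw [key]
    exact SemidirectProduct.inl_injective.comp hinj
  exact fun u v huv => this (by simp [MonoidHom.comp_apply, huv])

def bGen (n : ℕ) : FreeGroup (Fin 2) :=
  (FreeGroup.of 0)⁻¹ ^ n * FreeGroup.of 1 * (FreeGroup.of 0) ^ n

lemma bGen_injective : Injective (FreeGroup.lift bGen) := by
  classical
  let σ : FreeGroup (Fin 2) ≃* FreeGroup (Fin 2) :=
    FreeGroup.freeGroupCongr (Equiv.swap (0 : Fin 2) 1)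
  have hσ : σ.toMonoidHom.comp (FreeGroup.lift aGen) = FreeGroup.lift bGen := by
    apply FreeGroup.ext_hom
    intro n
    show σ (FreeGroup.lift aGen (FreeGroup.of n)) = FreeGroup.lift bGen (FreeGroup.of n)
    rw [FreeGroup.lift_apply_of, FreeGroup.lift_apply_of]
    have h0 : σ (FreeGroup.of 0) = FreeGroup.of 1 := by simp [σ]
    have h1 : σ (FreeGroup.of 1) = FreeGroup.of 0 := by simp [σ]
    simp only [aGen, bGen, map_mul, map_pow, map_inv, h0, h1]
  have : Injective (σ.toMonoidHom.comp (FreeGroup.lift aGen)) :=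
    σ.injective.comp aGen_injective
  rw [hσ] at this
  exact this

/-- Every countable group embeds into a quotient of the free group of rank 2
(SQ-universality of `F₂`, Higman–Neumann–Neumann). -/
lemma exists_embedding_free_quotient (C : Type) [Group C] [Countable C] :
    ∃ (N : Subgroup (FreeGroup (Fin 2))) (hN : N.Normal),
      letI := hN
      ∃ χ : C →* FreeGroup (Fin 2) ⧸ N, Injective χ := by
  classical
  obtain ⟨σC, hσC⟩ := exists_surjective_nat C
  let e : ℕ → C := fun n => Nat.rec 1 (fun m _ => σC m) n
  have he : Surjective e := fun c => by
    obtain ⟨n, rfl⟩ := hσC c; exact ⟨n + 1, rfl⟩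
  have he0 : e 0 = 1 := rfl
  -- the free product `D = C ∗ F₂`
  let D := Coprod C (FreeGroup (Fin 2))
  let fA : FreeGroup ℕ →* D := Coprod.inr.comp (FreeGroup.lift aGen)
  have hfA : Injective fA := by
    have : (⇑(fA) : FreeGroup ℕ → D) = ⇑(Coprod.inr) ∘ ⇑(FreeGroup.lift aGen) := rfl
    rw [this]
    exact Coprod.inr_injective.comp aGen_injective
  let fB : FreeGroup ℕ →* D :=
    FreeGroup.lift (fun n => Coprod.inl (e n) * Coprod.inr (bGen n))
  have hfB : Injective fB := by
    let p : D →* FreeGroup (Fin 2) := Coprod.lift 1 (MonoidHom.id _)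
    have hp : p.comp fB = FreeGroup.lift bGen := by
      apply FreeGroup.ext_hom
      intro n
      show p (fB (FreeGroup.of n)) = _
      rw [FreeGroup.lift_apply_of, FreeGroup.lift_apply_of]
      show p (Coprod.inl (e n) * Coprod.inr (bGen n)) = bGen n
      rw [map_mul, Coprod.lift_apply_inl, Coprod.lift_apply_inr]
      simp
    have : Injective (p.comp fB) := by rw [hp]; exact bGen_injective
    exact Injective.of_comp this
  -- the HNN extension
  let A : Subgroup D := fA.range
  let B : Subgroup D := fB.range
  let φ : A ≃* B := (MonoidHom.ofInjective hfA).symm.trans (MonoidHom.ofInjective hfB)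
  let E := HNNExtension D A B φ
  have hconj : ∀ w : FreeGroup ℕ,
      (HNNExtension.of (fB w) : E) =
        HNNExtension.t * HNNExtension.of (fA w) * HNNExtension.t⁻¹ := by
    intro w
    have hmem : fA w ∈ A := ⟨w, rfl⟩
    have h1 : (φ ⟨fA w, hmem⟩ : D) = fB w := by
      show (MonoidHom.ofInjective hfB ((MonoidHom.ofInjective hfA).symm ⟨fA w, hmem⟩) : D)
        = fB w
      have h2 : (MonoidHom.ofInjective hfA).symm ⟨fA w, hmem⟩ = w := by
        apply hfA
        rw [MonoidHom.apply_ofInjective_symm]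
      rw [h2, MonoidHom.ofInjective_apply]
    have h3 := HNNExtension.equiv_eq_conj (φ := φ) ⟨fA w, hmem⟩
    rw [h1] at h3
    exact h3
  -- the two-generator map onto `E`
  let π : FreeGroup (Fin 2) →* E :=
    FreeGroup.lift (fun i => if i = 0 then HNNExtension.of (Coprod.inr (FreeGroup.of 0))
      else HNNExtension.t)
  have πx : π (FreeGroup.of 0) = HNNExtension.of (Coprod.inr (FreeGroup.of 0)) := by
    simp [π]
  have πt : π (FreeGroup.of 1) = HNNExtension.t := by simp [π]
  -- computations of images of generators
  have hfA_of : ∀ n, fA (FreeGroup.of n) = Coprod.inr (aGen n) := by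
    intro n
    show Coprod.inr (FreeGroup.lift aGen (FreeGroup.of n)) = _
    rw [FreeGroup.lift_apply_of]
  have hfB_of : ∀ n, fB (FreeGroup.of n) = Coprod.inl (e n) * Coprod.inr (bGen n) :=
    fun n => FreeGroup.lift_apply_of
  have hxr : HNNExtension.of (Coprod.inr (FreeGroup.of (0 : Fin 2))) ∈ π.range :=
    ⟨FreeGroup.of 0, πx⟩
  have htr : (HNNExtension.t : E) ∈ π.range := ⟨FreeGroup.of 1, πt⟩
  have hyr : HNNExtension.of (Coprod.inr (FreeGroup.of (1 : Fin 2))) ∈ π.range := by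
    have h0 := hconj (FreeGroup.of 0)
    rw [hfA_of, hfB_of, he0] at h0
    simp only [aGen, bGen, pow_zero, inv_one, one_mul, mul_one, map_one] at h0
    rw [h0]
    exact mul_mem (mul_mem htr hxr) (inv_mem htr)
  have hFr : ∀ w : FreeGroup (Fin 2),
      HNNExtension.of (Coprod.inr w : D) ∈ π.range := by
    intro w
    induction w using FreeGroup.induction_on with
    | C1 => simpa using one_mem π.range
    | of i =>
        fin_cases i
        · exact hxr
        · exact hyr
    | inv_of i h =>
        rw [map_inv, map_inv]
        exact inv_mem h
    | mul u v hu hv =>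
        rw [map_mul, map_mul]
        exact mul_mem hu hv
  have hCr : ∀ c : C, HNNExtension.of (Coprod.inl c : D) ∈ π.range := by
    intro c
    obtain ⟨n, rfl⟩ := he c
    have h0 := hconj (FreeGroup.of n)
    rw [hfA_of, hfB_of] at h0
    have : (HNNExtension.of (Coprod.inl (e n) : D) : E) =
        (HNNExtension.t * HNNExtension.of (Coprod.inr (aGen n)) * HNNExtension.t⁻¹) *
          (HNNExtension.of (Coprod.inr (bGen n)))⁻¹ := by
      rw [← h0, map_mul]
      group
    rw [this]
    exact mul_mem (mul_mem (mul_mem htr (hFr _)) (inv_mem htr)) (inv_mem (hFr _))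
  have hπ : Surjective π := by
    intro z
    have : z ∈ π.range := by
      induction z using HNNExtension.induction_on with
      | of g =>
          induction g using Coprod.induction_on with
          | inl c => exact hCr c
          | inr w => exact hFr w
          | mul u v hu hv => rw [map_mul]; exact mul_mem hu hv
      | t => exact htr
      | mul u v hu hv => exact mul_mem hu hv
      | inv u hu => exact inv_mem hu
    exact this
  refine ⟨π.ker, MonoidHom.normal_ker π, ?_⟩
  let ι : C →* E := (HNNExtension.of).comp Coprod.inl
  have hι : Injective ι := by
    have : (⇑ι : C → E) = ⇑(HNNExtension.of) ∘ ⇑(Coprod.inl : C →* D) := rfl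
    rw [this]
    exact Function.Injective.comp (HNNExtension.of_injective φ) Coprod.inl_injective
  let q : E ≃* FreeGroup (Fin 2) ⧸ π.ker :=
    (QuotientGroup.quotientKerEquivOfSurjective π hπ).symm
  exact ⟨q.toMonoidHom.comp ι, q.injective.comp hι⟩

end Stmt17Aux

/-- `C` embeds into a quotient of `G`: there is a normal subgroup `N` of `G` and an
injective homomorphism `C →* G ⧸ N`. -/
def EmbedsInQuotient (G : Type) [Group G] (C : Type) [Group C] : Prop :=
  ∃ (N : Subgroup G) (hN : N.Normal),
    letI := hN
    ∃ φ : C →* G ⧸ N, Function.Injective φ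

/-- If `G` contains a free subgroup `F` of rank 2 with the congruence extension property
(for every normal subgroup `N` of `F`, `⟨N⟩^G ∩ F = N`), then `G` is SQ-universal: every
countable group embeds into a quotient of `G`. -/
theorem stmt_17 (G : Type) [Group G] (F : Subgroup G)
    (hfree : Nonempty (F ≃* FreeGroup (Fin 2)))
    (hcep : ∀ N : Subgroup F, N.Normal →
      Subgroup.normalClosure ((N.map F.subtype : Subgroup G) : Set G) ⊓ F
        = N.map F.subtype) :
    ∀ (C : Type) [Group C] [Countable C], EmbedsInQuotient G C := by
  intro C _ _
  obtain ⟨e2⟩ := hfree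
  obtain ⟨N₀, hN₀, χ, hχ⟩ := Stmt17Aux.exists_embedding_free_quotient C
  haveI := hN₀
  set N : Subgroup F := N₀.comap e2.toMonoidHom with hNdef
  have hN : N.Normal := hN₀.comap _
  set M : Subgroup G := Subgroup.normalClosure ((N.map F.subtype : Subgroup G) : Set G)
    with hMdef
  have hM : M.Normal := Subgroup.normalClosure_normal
  haveI := hM
  let ρ : FreeGroup (Fin 2) →* G ⧸ M :=
    (QuotientGroup.mk' M).comp (F.subtype.comp e2.symm.toMonoidHom)
  have hker : ∀ w ∈ N₀, ρ w = 1 := by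
    intro w hw
    have h1 : e2.symm w ∈ N := by
      show e2 (e2.symm w) ∈ N₀
      simpa using hw
    have h2 : (F.subtype (e2.symm w) : G) ∈ M := by
      apply Subgroup.subset_normalClosure
      exact ⟨e2.symm w, h1, rfl⟩
    exact (QuotientGroup.eq_one_iff _).mpr h2
  let ρbar : (FreeGroup (Fin 2) ⧸ N₀) →* G ⧸ M := QuotientGroup.lift N₀ ρ hker
  have hρbar : Injective ρbar := by
    rw [injective_iff_map_eq_one]
    intro z hz
    induction z using QuotientGroup.induction_on with
    | H w =>
        have hw : ρ w = 1 := hz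
        have h1 : (F.subtype (e2.symm w) : G) ∈ M := (QuotientGroup.eq_one_iff _).mp hw
        have h2 : (F.subtype (e2.symm w) : G) ∈ M ⊓ F :=
          ⟨h1, SetLike.coe_mem _⟩
        rw [hcep N hN] at h2
        obtain ⟨n, hn, hnw⟩ := h2
        have h3 : e2.symm w ∈ N := by
          have : n = e2.symm w := Subtype.ext hnw
          rwa [← this]
        have h4 : w ∈ N₀ := by
          have : e2 (e2.symm w) ∈ N₀ := h3
          simpa using this
        exact (QuotientGroup.eq_one_iff w).mpr h4
  exact ⟨M, hM, ρbar.comp χ, hρbar.comp hχ⟩
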